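/- Let F be an imaginary quadratic field, i.e. a number field of degree 2 over ℚ with no real embeddings, with complex embedding σ : F → ℂ. Then every reduced fractional ideal of F is 1-reduced. -/

import Mathlib

open NumberField
open scoped nonZeroDivisors

/-- `1` is primitive in `I`: `1 ∈ I` and no `1/d ∈ I` for an integer `d ≥ 2`. -/
def IsOnePrimitive {F : Type*} [Field F] [NumberField F]
    (I : FractionalIdeal (𝓞 F)⁰ F) : Prop :=
  (1 : F) ∈ I ∧ ∀ d : ℕ, 2 ≤ d → ((d : F))⁻¹ ∉ I

/-- In an imaginary quadratic field `F` (degree 2 over `ℚ`, no real embeddings) with complex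
embedding `σ`, every reduced fractional ideal is 1-reduced: `1` is primitive in `I` and there
is `u > 0` with `‖1‖_u ≤ ‖g‖_u` for every nonzero `g ∈ I`, where `‖g‖_u² = 2u²|σ g|²`. -/
theorem imaginary_quadratic_reduced_is_oneReduced {F : Type*} [Field F] [NumberField F]
    (hdeg : Module.finrank ℚ F = 2) (hreal : IsEmpty (F →+* ℝ))
    (σ : F →+* ℂ)
    (I : FractionalIdeal (𝓞 F)⁰ F)
    (hred : (1 : F) ∈ I ∧ ∀ g ∈ I, ‖σ g‖ < 1 → g = 0) :
    IsOnePrimitive I ∧ ∃ u : ℝ, 0 < u ∧ ∀ g ∈ I, g ≠ 0 →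
      Real.sqrt (2 * u ^ 2 * ‖σ 1‖ ^ 2) ≤
        Real.sqrt (2 * u ^ 2 * ‖σ g‖ ^ 2) := by
  obtain ⟨h1, hmin⟩ := hred
  constructor
  · refine ⟨h1, fun d hd hmem => ?_⟩
    have hd0 : (d : F) ≠ 0 := by
      exact_mod_cast Nat.cast_ne_zero.mpr (by omega)
    have habs : ‖σ ((d : F))⁻¹‖ < 1 := by
      rw [map_inv₀, map_natCast, norm_inv, Complex.norm_natCast]
      rw [inv_lt_one_iff₀]
      right
      exact_mod_cast by omega
    have := hmin _ hmem habs
    exact hd0 (by simpa [inv_eq_zero] using this)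
  · refine ⟨1, one_pos, fun g hg hg0 => ?_⟩
    have hge : 1 ≤ ‖σ g‖ := by
      by_contra h
      exact hg0 (hmin g hg (lt_of_not_ge h))
    apply Real.sqrt_le_sqrt
    have : ‖σ 1‖ = 1 := by simp
    rw [this]
    nlinarith [norm_nonneg (σ g)]
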